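/- Theorem 1 (existence of canonical string operators, abstract core). Let P be a finite set of plaquettes and δ a fixed configuration (the flip pattern α^P of a path P). Assume the consistency condition: for every configuration i and any two finite lists L, L' of plaquettes from P (repetitions allowed) with equal total flips Σ_{p∈L} α_p = Σ_{p∈L'} α_p, one has θ_δ(i, L) = θ_δ(i, L'). Then there exists a function F : (E → ZMod 2) → ℂ with |F(c)| = 1 for all configurations c such that: (a) F(c + α_p) · b_p(c) = b_p(c + δ) · F(c) for every configuration c and every plaquette p ∈ P (so the string operator B(δ, F) commutes with every plaquette operator B(α_p, b_p)), and (b) F(c + δ) = conj(F(c)) for every configuration c (so B(δ, F) is canonical: it is self-adjoint and squares to the identity). -/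

import Mathlib

/-- A plaquette: a flip pattern `α_p` together with a unit-modulus phase function `b_p`. -/
structure Plaquette (E : Type*) where
  flip : E → ZMod 2
  phase : (E → ZMod 2) → ℂ
  unit_phase : ∀ c, ‖phase c‖ = 1

/-- `theta δ i [p₁, …, p_m] = ∏_k b_{p_k}(i + δ + α_{p₁} + ⋯ + α_{p_{k-1}}) /
    b_{p_k}(i + α_{p₁} + ⋯ + α_{p_{k-1}})` (Eq. (21) of the paper). -/
noncomputable def theta {E : Type*} (δ : E → ZMod 2) :
    (E → ZMod 2) → List (Plaquette E) → ℂ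
  | _, [] => 1
  | i, p :: L => (p.phase (i + δ) / p.phase i) * theta δ (i + p.flip) L

section Aux
variable {E : Type*}

lemma Plaquette.phase_ne_zero (p : Plaquette E) (c : E → ZMod 2) : p.phase c ≠ 0 := by
  intro h
  have := p.unit_phase c
  rw [h] at this
  simp at this

lemma zmod2_add_self (x : E → ZMod 2) : x + x = 0 := by
  funext e
  have h : ∀ a : ZMod 2, a + a = 0 := by decide
  exact h (x e)

lemma theta_append (δ i : E → ZMod 2) (L L' : List (Plaquette E)) :
    theta δ i (L ++ L') = theta δ i L * theta δ (i + (L.map Plaquette.flip).sum) L' := by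
  induction L generalizing i with
  | nil => simp [theta]
  | cons p L ih =>
    simp only [List.cons_append, theta, List.map_cons, List.sum_cons, List.append_eq]
    rw [ih, mul_assoc, add_assoc]

lemma theta_abs (δ i : E → ZMod 2) (L : List (Plaquette E)) :
    ‖theta δ i L‖ = 1 := by
  induction L generalizing i with
  | nil => simp [theta]
  | cons p L ih =>
    simp [theta, map_mul, map_div₀, p.unit_phase, ih]

lemma theta_ne_zero (δ i : E → ZMod 2) (L : List (Plaquette E)) :
    theta δ i L ≠ 0 := by
  intro h
  have := theta_abs δ i L
  rw [h] at this
  simp at this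

lemma conj_phase (p : Plaquette E) (c : E → ZMod 2) :
    starRingEnd ℂ (p.phase c) = (p.phase c)⁻¹ :=
  (Complex.inv_eq_conj (p.unit_phase c)).symm

lemma theta_conj (δ i : E → ZMod 2) (L : List (Plaquette E)) :
    starRingEnd ℂ (theta δ i L) = theta δ (i + δ) L := by
  induction L generalizing i with
  | nil => simp [theta]
  | cons p L ih =>
    simp only [theta, map_mul, map_div₀, conj_phase, ih]
    have h1 : i + δ + δ = i := by rw [add_assoc, zmod2_add_self, add_zero]
    have h2 : i + δ + p.flip = i + p.flip + δ := by
      rw [add_assoc, add_assoc, add_comm δ p.flip]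
    rw [h1, h2]
    field_simp

end Aux

section Machinery
variable {E : Type*}

/-- `inA P a` : `a` is a sum of flips of plaquettes in `P`. -/
def inA (P : Finset (Plaquette E)) (a : E → ZMod 2) : Prop :=
  ∃ L : List (Plaquette E), (∀ p ∈ L, p ∈ P) ∧ (L.map Plaquette.flip).sum = a

lemma inA_zero (P : Finset (Plaquette E)) : inA P 0 := ⟨[], by simp, by simp⟩

lemma inA_add {P : Finset (Plaquette E)} {a b : E → ZMod 2}
    (ha : inA P a) (hb : inA P b) : inA P (a + b) := by
  obtain ⟨L, hL, hLs⟩ := ha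
  obtain ⟨L', hL', hL's⟩ := hb
  refine ⟨L ++ L', ?_, by simp [hLs, hL's]⟩
  intro p hp
  rcases List.mem_append.mp hp with h | h
  exacts [hL p h, hL' p h]

lemma inA_flip {P : Finset (Plaquette E)} {p : Plaquette E} (hp : p ∈ P) :
    inA P p.flip := ⟨[p], by simpa using hp, by simp⟩

/-- the setoid whose classes are the cosets of the subgroup of flip sums. -/
def setoid1 (P : Finset (Plaquette E)) : Setoid (E → ZMod 2) where
  r c c' := inA P (c + c')
  iseqv := by
    constructor
    · intro x; rw [zmod2_add_self]; exact inA_zero P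
    · intro x y h; rwa [add_comm]
    · intro x y z h1 h2
      have := inA_add h1 h2
      have e : x + y + (y + z) = x + z := by
        rw [show x + y + (y + z) = x + (y + y) + z by abel, zmod2_add_self, add_zero]
      rwa [e] at this

noncomputable def rep1 (P : Finset (Plaquette E)) (c : E → ZMod 2) : E → ZMod 2 :=
  Quotient.out (Quotient.mk (setoid1 P) c)

lemma rep1_rel (P : Finset (Plaquette E)) (c : E → ZMod 2) :
    inA P (rep1 P c + c) :=
  Quotient.exact (s := setoid1 P) (Quotient.out_eq (Quotient.mk (setoid1 P) c))

lemma rep1_eq {P : Finset (Plaquette E)} {c c' : E → ZMod 2}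
    (h : inA P (c + c')) : rep1 P c = rep1 P c' :=
  congrArg Quotient.out (Quotient.sound (s := setoid1 P) h)

open Classical in
/-- A canonical list representing `a ∈ A`. -/
noncomputable def someList (P : Finset (Plaquette E)) (a : E → ZMod 2) :
    List (Plaquette E) :=
  if h : inA P a then h.choose else []

lemma someList_spec {P : Finset (Plaquette E)} {a : E → ZMod 2} (h : inA P a) :
    (∀ p ∈ someList P a, p ∈ P) ∧ ((someList P a).map Plaquette.flip).sum = a := by
  rw [someList, dif_pos h]
  exact h.choose_spec

end Machinery

section Usqrt

/-- A square root on the unit circle. -/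
noncomputable def usqrt (z : ℂ) : ℂ := Complex.exp (Complex.log z / 2)

lemma usqrt_sq {z : ℂ} (hz : z ≠ 0) : usqrt z ^ 2 = z := by
  rw [usqrt, sq, ← Complex.exp_add, add_halves, Complex.exp_log hz]

lemma usqrt_abs {z : ℂ} (h : ‖z‖ = 1) : ‖usqrt z‖ = 1 := by
  have hz : z ≠ 0 := by intro h0; rw [h0] at h; simp at h
  have h2 : ‖usqrt z‖ ^ 2 = 1 := by
    rw [← norm_pow, usqrt_sq hz, h]
  have hnn : 0 ≤ ‖usqrt z‖ := norm_nonneg _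
  nlinarith [h2, hnn]

end Usqrt

section Phi
variable {E : Type*} (P : Finset (Plaquette E)) (δ : E → ZMod 2)

/-- the accumulated phase from the representative `r` to `c`. -/
noncomputable def phi (r c : E → ZMod 2) : ℂ :=
  theta δ r (someList P (r + c))

variable {P δ}

def Hcons (P : Finset (Plaquette E)) (δ : E → ZMod 2) : Prop :=
  ∀ (i : E → ZMod 2) (L L' : List (Plaquette E)),
      (∀ p ∈ L, p ∈ P) → (∀ p ∈ L', p ∈ P) →
      (L.map Plaquette.flip).sum = (L'.map Plaquette.flip).sum →
      theta δ i L = theta δ i L'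

lemma phi_eq (hcons : Hcons P δ) {r c : E → ZMod 2} (h : inA P (r + c)) {L : List (Plaquette E)}
    (hL : ∀ p ∈ L, p ∈ P) (hLs : (L.map Plaquette.flip).sum = r + c) :
    theta δ r L = phi P δ r c := by
  obtain ⟨h1, h2⟩ := someList_spec h
  exact hcons r L _ hL h1 (by rw [hLs, h2])

lemma phi_abs (r c : E → ZMod 2) : ‖phi P δ r c‖ = 1 :=
  theta_abs δ r _

lemma phi_flip (hcons : Hcons P δ) {r c : E → ZMod 2} (h : inA P (r + c)) {p : Plaquette E}
    (hp : p ∈ P) :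
    phi P δ r (c + p.flip) = phi P δ r c * (p.phase (c + δ) / p.phase c) := by
  obtain ⟨h1, h2⟩ := someList_spec h
  have hsum : ((someList P (r + c) ++ [p]).map Plaquette.flip).sum
      = r + (c + p.flip) := by simp [h2, add_assoc]
  have hmem : ∀ q ∈ someList P (r + c) ++ [p], q ∈ P := by
    intro q hq
    rcases List.mem_append.mp hq with hq | hq
    · exact h1 q hq
    · simp at hq; rwa [hq]
  have hin : inA P (r + (c + p.flip)) := ⟨_, hmem, hsum⟩
  rw [← phi_eq hcons hin hmem hsum, theta_append, h2]
  have hc : r + (r + c) = c := by rw [← add_assoc, zmod2_add_self, zero_add]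
  rw [hc, phi_eq hcons h h1 h2]
  simp [theta]

lemma phi_delta (hcons : Hcons P δ) {r c : E → ZMod 2} (h : inA P (r + c)) {Lδ : List (Plaquette E)}
    (hLδ : ∀ p ∈ Lδ, p ∈ P) (hLδs : (Lδ.map Plaquette.flip).sum = δ) :
    phi P δ r (c + δ) = theta δ r Lδ * starRingEnd ℂ (phi P δ r c) := by
  obtain ⟨h1, h2⟩ := someList_spec h
  have hmem : ∀ q ∈ Lδ ++ someList P (r + c), q ∈ P := by
    intro q hq
    rcases List.mem_append.mp hq with hq | hq
    exacts [hLδ q hq, h1 q hq]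
  have hsum : ((Lδ ++ someList P (r + c)).map Plaquette.flip).sum = r + (c + δ) := by
    simp only [List.map_append, List.sum_append, hLδs, h2]
    abel
  have hin : inA P (r + (c + δ)) := ⟨_, hmem, hsum⟩
  rw [← phi_eq hcons hin hmem hsum, theta_append, hLδs, phi, theta_conj]

end Phi

section Machinery2
variable {E : Type*}

lemma inA2_add {P : Finset (Plaquette E)} {δ a b : E → ZMod 2}
    (ha : inA P a ∨ inA P (a + δ)) (hb : inA P b ∨ inA P (b + δ)) :
    inA P (a + b) ∨ inA P (a + b + δ) := by
  rcases ha with ha | ha <;> rcases hb with hb | hb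
  · exact Or.inl (inA_add ha hb)
  · exact Or.inr (by rw [add_assoc]; exact inA_add ha hb)
  · exact Or.inr (by rw [show a + b + δ = a + δ + b by abel]; exact inA_add ha hb)
  · refine Or.inl ?_
    have := inA_add ha hb
    rwa [show a + δ + (b + δ) = a + b + (δ + δ) by abel, zmod2_add_self, add_zero] at this

/-- cosets of the subgroup generated by the flip sums together with `δ`. -/
def setoid2 (P : Finset (Plaquette E)) (δ : E → ZMod 2) : Setoid (E → ZMod 2) where
  r c c' := inA P (c + c') ∨ inA P (c + c' + δ)
  iseqv := by
    constructor
    · intro x; rw [zmod2_add_self]; exact Or.inl (inA_zero P)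
    · intro x y h; rwa [add_comm]
    · intro x y z h1 h2
      have := inA2_add h1 h2
      rwa [show x + y + (y + z) = x + z by
        rw [show x + y + (y + z) = x + (y + y) + z by abel, zmod2_add_self, add_zero]] at this

noncomputable def rep2 (P : Finset (Plaquette E)) (δ : E → ZMod 2) (c : E → ZMod 2) :
    E → ZMod 2 :=
  Quotient.out (Quotient.mk (setoid2 P δ) c)

lemma rep2_rel (P : Finset (Plaquette E)) (δ c : E → ZMod 2) :
    inA P (rep2 P δ c + c) ∨ inA P (rep2 P δ c + c + δ) :=
  Quotient.exact (s := setoid2 P δ) (Quotient.out_eq (Quotient.mk (setoid2 P δ) c))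

lemma rep2_eq {P : Finset (Plaquette E)} {δ c c' : E → ZMod 2}
    (h : inA P (c + c') ∨ inA P (c + c' + δ)) : rep2 P δ c = rep2 P δ c' :=
  congrArg Quotient.out (Quotient.sound (s := setoid2 P δ) h)

end Machinery2


/-- Theorem 1 (existence of canonical string operators, abstract core). -/
theorem canonical_string_operator_exists {E : Type*} [Fintype E] [DecidableEq E]
    (δ : E → ZMod 2) (P : Finset (Plaquette E))
    (hcons : ∀ (i : E → ZMod 2) (L L' : List (Plaquette E)),
      (∀ p ∈ L, p ∈ P) → (∀ p ∈ L', p ∈ P) →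
      (L.map Plaquette.flip).sum = (L'.map Plaquette.flip).sum →
      theta δ i L = theta δ i L') :
    ∃ F : (E → ZMod 2) → ℂ,
      (∀ c, ‖F c‖ = 1) ∧
      (∀ c, ∀ p ∈ P, F (c + p.flip) * p.phase c = p.phase (c + δ) * F c) ∧
      (∀ c, F (c + δ) = starRingEnd ℂ (F c)) := by
  classical
  have hcons' : Hcons P δ := hcons
  by_cases hδ : inA P δ
  · -- Case 1 : δ is itself a sum of flips
    obtain ⟨Lδ, hLδ, hLδs⟩ := hδ
    refine ⟨fun c => usqrt (starRingEnd ℂ (theta δ (rep1 P c) Lδ)) *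
        phi P δ (rep1 P c) c, ?_, ?_, ?_⟩
    · intro c
      rw [norm_mul, usqrt_abs (by rw [Complex.norm_conj]; exact theta_abs δ _ Lδ),
        phi_abs, mul_one]
    · intro c p hp
      have hrep : rep1 P (c + p.flip) = rep1 P c := by
        refine (rep1_eq ?_).symm
        rw [← add_assoc, zmod2_add_self, zero_add]
        exact inA_flip hp
      beta_reduce
      rw [hrep, phi_flip hcons' (rep1_rel P c) hp]
      field_simp [Plaquette.phase_ne_zero]
    · intro c
      have hrep : rep1 P (c + δ) = rep1 P c := by
        refine (rep1_eq ?_).symm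
        rw [← add_assoc, zmod2_add_self, zero_add]
        exact ⟨Lδ, hLδ, hLδs⟩
      beta_reduce
      rw [hrep, phi_delta hcons' (rep1_rel P c) hLδ hLδs, map_mul]
      set r := rep1 P c
      set z := starRingEnd ℂ (theta δ r Lδ) with hz
      have hzabs : ‖z‖ = 1 := by rw [hz, Complex.norm_conj]; exact theta_abs δ _ _
      have hzne : z ≠ 0 := by intro h0; rw [h0] at hzabs; simp at hzabs
      have hu2 : usqrt z ^ 2 = z := usqrt_sq hzne
      have hkey : usqrt z * theta δ r Lδ = starRingEnd ℂ (usqrt z) := by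
        rw [← Complex.inv_eq_conj (usqrt_abs hzabs)]
        refine eq_inv_of_mul_eq_one_left ?_
        rw [show usqrt z * theta δ r Lδ * usqrt z = usqrt z ^ 2 * theta δ r Lδ by ring,
          hu2, hz, ← Complex.inv_eq_conj (theta_abs δ r Lδ)]
        exact inv_mul_cancel₀ (theta_ne_zero δ r Lδ)
      rw [← mul_assoc, hkey]
  · -- Case 2 : δ is not a sum of flips
    have hex : ∀ x : E → ZMod 2, inA P x → inA P (x + δ) → False := by
      intro x h1 h2
      refine hδ ?_
      have := inA_add h1 h2
      rwa [show x + (x + δ) = δ by rw [← add_assoc, zmod2_add_self, zero_add]] at this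
    have hrepf : ∀ (c : E → ZMod 2) (p : Plaquette E), p ∈ P →
        rep2 P δ (c + p.flip) = rep2 P δ c := by
      intro c p hp
      refine (rep2_eq (Or.inl ?_)).symm
      rw [← add_assoc, zmod2_add_self, zero_add]
      exact inA_flip hp
    have hrepd : ∀ c : E → ZMod 2, rep2 P δ (c + δ) = rep2 P δ c := by
      intro c
      refine (rep2_eq (Or.inr ?_)).symm
      rw [← add_assoc, zmod2_add_self, zero_add, zmod2_add_self]
      exact inA_zero P
    have hprim : ∀ c : E → ZMod 2, ¬ inA P (rep2 P δ c + c) →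
        inA P (rep2 P δ c + (c + δ)) := by
      intro c hc
      rcases rep2_rel P δ c with h | h
      · exact absurd h hc
      · rwa [add_assoc] at h
    refine ⟨fun c => if inA P (rep2 P δ c + c) then phi P δ (rep2 P δ c) c
        else starRingEnd ℂ (phi P δ (rep2 P δ c) (c + δ)), ?_, ?_, ?_⟩
    · intro c
      beta_reduce
      split_ifs
      · exact phi_abs _ _
      · rw [Complex.norm_conj]; exact phi_abs _ _
    · intro c p hp
      simp only [hrepf c p hp]
      by_cases hc : inA P (rep2 P δ c + c)
      · have hc2 : inA P (rep2 P δ c + (c + p.flip)) := by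
          rw [← add_assoc]; exact inA_add hc (inA_flip hp)
        rw [if_pos hc2, if_pos hc, phi_flip hcons' hc hp]
        field_simp [Plaquette.phase_ne_zero]
      · have hc2 : ¬ inA P (rep2 P δ c + (c + p.flip)) := by
          intro h
          refine hc ?_
          have := inA_add h (inA_flip hp)
          rwa [show rep2 P δ c + (c + p.flip) + p.flip
            = rep2 P δ c + c + (p.flip + p.flip) by abel, zmod2_add_self, add_zero] at this
        have hcd : inA P (rep2 P δ c + (c + δ)) := hprim c hc
        rw [if_neg hc2, if_neg hc]
        rw [show c + p.flip + δ = (c + δ) + p.flip by abel,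
          phi_flip hcons' hcd hp, map_mul, map_div₀, conj_phase, conj_phase,
          show c + δ + δ = c by rw [add_assoc, zmod2_add_self, add_zero]]
        field_simp [Plaquette.phase_ne_zero]
    · intro c
      simp only [hrepd c]
      by_cases hc : inA P (rep2 P δ c + c)
      · have hnc : ¬ inA P (rep2 P δ c + (c + δ)) := by
          intro h
          exact hex _ hc (by rwa [add_assoc])
        rw [if_neg hnc, if_pos hc,
          show c + δ + δ = c by rw [add_assoc, zmod2_add_self, add_zero]]
      · rw [if_pos (hprim c hc), if_neg hc, Complex.conj_conj]
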